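/- arXiv:1404.4927 — 2 statements merged into one kernel-verified Lean document; each statement's English description precedes it below -/
import Mathlib

section
/- Let y = A·x_S + e where x_S ∈ ℝⁿ is K-sparse with support S, and A satisfies the RIP of order 3K with constant δ_{3K} and of order 4K with constant δ_{4K} < 1. Let U be an index set with |U| ≤ 3K, let u be the least-squares solution on U, and let x' = H_K(u). Then ‖x_S − x'‖ ≤ √((1+2δ_{4K}²)/(1−δ_{4K}²))·‖(x_S)_{\overline{U}}‖ + √3·τ₁·‖e‖, where τ₁ := √(1+δ_{3K})/(1−δ_{4K}). -/
open Finset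

/-- Euclidean norm of a vector. -/
noncomputable def euclNorm {d : ℕ} (x : Fin d → ℝ) : ℝ := Real.sqrt (∑ i, x i ^ 2)

/-- The support of a vector, as a finite set of indices. -/
noncomputable def supp {d : ℕ} (x : Fin d → ℝ) : Finset (Fin d) :=
  Finset.univ.filter (fun i => x i ≠ 0)

/-- `restrict x T` agrees with `x` on `T` and is zero outside `T`. -/
def restrict {d : ℕ} (x : Fin d → ℝ) (T : Finset (Fin d)) : Fin d → ℝ :=
  fun i => if i ∈ T then x i else 0

/-- `A` satisfies the Restricted Isometry Property of order `L` with constant `δ ∈ (0,1)`. -/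
def RIP {m d : ℕ} (A : Matrix (Fin m) (Fin d) ℝ) (L : ℕ) (δ : ℝ) : Prop :=
  0 < δ ∧ δ < 1 ∧
  ∀ x : Fin d → ℝ, (supp x).card ≤ L →
    (1 - δ) * euclNorm x ^ 2 ≤ euclNorm (A.mulVec x) ^ 2 ∧
    euclNorm (A.mulVec x) ^ 2 ≤ (1 + δ) * euclNorm x ^ 2

/-- `u` is the least-squares solution on the index set `U`: it is supported on `U` and
`y - A u` is orthogonal to `A z` whenever `z` is supported on `U`. -/
def LeastSq {m d : ℕ} (A : Matrix (Fin m) (Fin d) ℝ) (y : Fin m → ℝ)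
    (U : Finset (Fin d)) (u : Fin d → ℝ) : Prop :=
  supp u ⊆ U ∧ ∀ z : Fin d → ℝ, supp z ⊆ U →
    ∑ i, (y i - A.mulVec u i) * A.mulVec z i = 0

section Helpers

lemma en_nonneg {d : ℕ} (x : Fin d → ℝ) : 0 ≤ euclNorm x := Real.sqrt_nonneg _

lemma en_sq {d : ℕ} (x : Fin d → ℝ) : euclNorm x ^ 2 = ∑ i, x i ^ 2 :=
  Real.sq_sqrt (by positivity)

lemma mem_supp {d : ℕ} {x : Fin d → ℝ} {i : Fin d} : i ∈ supp x ↔ x i ≠ 0 := by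
  simp [supp]

lemma supp_zero_outside {d : ℕ} {x : Fin d → ℝ} {P : Finset (Fin d)}
    (h : supp x ⊆ P) {i : Fin d} (hi : i ∉ P) : x i = 0 := by
  by_contra hx
  exact hi (h (mem_supp.2 hx))

lemma sum_sq_restrict {d : ℕ} (x : Fin d → ℝ) (P : Finset (Fin d)) :
    ∑ i, restrict x P i ^ 2 = ∑ i ∈ P, x i ^ 2 := by
  simp only [_root_.restrict, apply_ite (· ^ 2)]
  simp [Finset.sum_ite_mem]

lemma supp_restrict {d : ℕ} (x : Fin d → ℝ) (P : Finset (Fin d)) :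
    supp (restrict x P) ⊆ P := by
  intro i hi
  rw [mem_supp] at hi
  by_contra h
  simp [_root_.restrict, h] at hi

lemma supp_add {d : ℕ} (x z : Fin d → ℝ) : supp (x + z) ⊆ supp x ∪ supp z := by
  intro i hi
  rw [mem_supp] at hi
  simp only [Finset.mem_union, mem_supp, Pi.add_apply] at *
  by_contra h
  push_neg at h
  simp [h.1, h.2] at hi

lemma supp_sub {d : ℕ} (x z : Fin d → ℝ) : supp (x - z) ⊆ supp x ∪ supp z := by
  intro i hi
  rw [mem_supp] at hi
  simp only [Finset.mem_union, mem_supp, Pi.sub_apply] at *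
  by_contra h
  push_neg at h
  simp [h.1, h.2] at hi

lemma supp_smul {d : ℕ} (c : ℝ) (x : Fin d → ℝ) : supp (c • x) ⊆ supp x := by
  intro i hi
  rw [mem_supp] at hi
  simp only [Pi.smul_apply, smul_eq_mul] at hi
  exact mem_supp.2 (right_ne_zero_of_mul hi)

lemma rip_bound {m d L : ℕ} {A : Matrix (Fin m) (Fin d) ℝ} {δ : ℝ} (hR : RIP A L δ)
    {x : Fin d → ℝ} (hx : (supp x).card ≤ L) :
    |(∑ i, A.mulVec x i ^ 2) - ∑ i, x i ^ 2| ≤ δ * ∑ i, x i ^ 2 := by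
  obtain ⟨h1, h2⟩ := hR.2.2 x hx
  rw [en_sq, en_sq] at h1 h2
  rw [abs_le]
  constructor <;> linarith

lemma rip_polar_half {m d L : ℕ} {A : Matrix (Fin m) (Fin d) ℝ} {δ : ℝ} (hR : RIP A L δ)
    (x z : Fin d → ℝ) (hc : ((supp x) ∪ (supp z)).card ≤ L) :
    |(∑ i, A.mulVec x i * A.mulVec z i) - ∑ i, x i * z i| ≤
      δ / 2 * ((∑ i, x i ^ 2) + ∑ i, z i ^ 2) := by
  have hp := rip_bound hR (le_trans (Finset.card_le_card (supp_add x z)) hc)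
  have hm := rip_bound hR (le_trans (Finset.card_le_card (supp_sub x z)) hc)
  have e1 : ∑ i, (x + z) i ^ 2 = (∑ i, x i ^ 2) + 2 * (∑ i, x i * z i) + ∑ i, z i ^ 2 := by
    rw [Finset.mul_sum, ← Finset.sum_add_distrib, ← Finset.sum_add_distrib]
    exact Finset.sum_congr rfl fun i _ => by simp [Pi.add_apply]; ring
  have e2 : ∑ i, (x - z) i ^ 2 = (∑ i, x i ^ 2) - 2 * (∑ i, x i * z i) + ∑ i, z i ^ 2 := by
    rw [Finset.mul_sum]
    rw [show ((∑ i, x i ^ 2) - (∑ i, 2 * (x i * z i)) + ∑ i, z i ^ 2)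
        = ∑ i, (x i ^ 2 - 2 * (x i * z i) + z i ^ 2) by
      rw [Finset.sum_add_distrib, Finset.sum_sub_distrib]]
    exact Finset.sum_congr rfl fun i _ => by simp [Pi.sub_apply]; ring
  have f1 : ∑ i, A.mulVec (x + z) i ^ 2
      = (∑ i, A.mulVec x i ^ 2) + 2 * (∑ i, A.mulVec x i * A.mulVec z i)
        + ∑ i, A.mulVec z i ^ 2 := by
    rw [Finset.mul_sum, ← Finset.sum_add_distrib, ← Finset.sum_add_distrib]
    exact Finset.sum_congr rfl fun i _ => by rw [Matrix.mulVec_add]; simp [Pi.add_apply]; ring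
  have f2 : ∑ i, A.mulVec (x - z) i ^ 2
      = (∑ i, A.mulVec x i ^ 2) - 2 * (∑ i, A.mulVec x i * A.mulVec z i)
        + ∑ i, A.mulVec z i ^ 2 := by
    rw [Finset.mul_sum]
    rw [show ((∑ i, A.mulVec x i ^ 2) - (∑ i, 2 * (A.mulVec x i * A.mulVec z i))
        + ∑ i, A.mulVec z i ^ 2)
        = ∑ i, (A.mulVec x i ^ 2 - 2 * (A.mulVec x i * A.mulVec z i) + A.mulVec z i ^ 2) by
      rw [Finset.sum_add_distrib, Finset.sum_sub_distrib]]
    exact Finset.sum_congr rfl fun i _ => by rw [Matrix.mulVec_sub]; simp [Pi.sub_apply]; ring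
  rw [e1, f1] at hp
  rw [e2, f2] at hm
  rw [abs_le] at *
  have hx2 : (0:ℝ) ≤ ∑ i, x i ^ 2 := by positivity
  have hz2 : (0:ℝ) ≤ ∑ i, z i ^ 2 := by positivity
  constructor <;> nlinarith [hp.1, hp.2, hm.1, hm.2]

lemma en_eq_zero {d : ℕ} {x : Fin d → ℝ} (h : euclNorm x = 0) : x = 0 := by
  have h2 : ∑ i, x i ^ 2 = 0 := by
    have := en_sq x
    rw [h] at this
    simpa using this.symm
  funext i
  have := (Finset.sum_eq_zero_iff_of_nonneg (fun i _ => sq_nonneg (x i))).1 h2 i (Finset.mem_univ i)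
  exact pow_eq_zero_iff (by norm_num) |>.1 this

lemma rip_polar {m d L : ℕ} {A : Matrix (Fin m) (Fin d) ℝ} {δ : ℝ} (hR : RIP A L δ)
    (x z : Fin d → ℝ) (hc : ((supp x) ∪ (supp z)).card ≤ L) :
    |(∑ i, A.mulVec x i * A.mulVec z i) - ∑ i, x i * z i| ≤
      δ * euclNorm x * euclNorm z := by
  rcases eq_or_lt_of_le (en_nonneg x) with hx | hx
  · have : x = 0 := en_eq_zero hx.symm
    subst this
    simp only [Matrix.mulVec_zero, Pi.zero_apply, zero_mul, Finset.sum_const_zero, sub_self,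
      abs_zero]
    exact mul_nonneg (mul_nonneg hR.1.le (en_nonneg _)) (en_nonneg _)
  rcases eq_or_lt_of_le (en_nonneg z) with hz | hz
  · have : z = 0 := en_eq_zero hz.symm
    subst this
    simp only [Matrix.mulVec_zero, Pi.zero_apply, mul_zero, Finset.sum_const_zero, sub_self,
      abs_zero]
    exact mul_nonneg (mul_nonneg hR.1.le (en_nonneg _)) (en_nonneg _)
  set nx := euclNorm x with hnx
  set nz := euclNorm z with hnz
  set s : ℝ := Real.sqrt (nz / nx) with hs
  have hspos : 0 < s := Real.sqrt_pos.2 (by positivity)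
  have hss : s ^ 2 = nz / nx := Real.sq_sqrt (by positivity)
  have key := rip_polar_half hR (s • x) (s⁻¹ • z) (le_trans (Finset.card_le_card
    (Finset.union_subset_union (supp_smul s x) (supp_smul s⁻¹ z))) hc)
  have hA1 : ∀ i, A.mulVec (s • x) i = s * A.mulVec x i := by
    intro i; rw [Matrix.mulVec_smul]; simp
  have hA2 : ∀ i, A.mulVec (s⁻¹ • z) i = s⁻¹ * A.mulVec z i := by
    intro i; rw [Matrix.mulVec_smul]; simp
  have e1 : (∑ i, A.mulVec (s • x) i * A.mulVec (s⁻¹ • z) i)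
      = ∑ i, A.mulVec x i * A.mulVec z i := by
    refine Finset.sum_congr rfl fun i _ => ?_
    rw [hA1, hA2]
    field_simp
  have e2 : (∑ i, (s • x) i * (s⁻¹ • z) i) = ∑ i, x i * z i := by
    refine Finset.sum_congr rfl fun i _ => ?_
    simp only [Pi.smul_apply, smul_eq_mul]
    field_simp
  have e3 : (∑ i, (s • x) i ^ 2) = nz / nx * ∑ i, x i ^ 2 := by
    rw [Finset.mul_sum]
    refine Finset.sum_congr rfl fun i _ => ?_
    simp only [Pi.smul_apply, smul_eq_mul, mul_pow, hss]
  have e4 : (∑ i, (s⁻¹ • z) i ^ 2) = nx / nz * ∑ i, z i ^ 2 := by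
    rw [Finset.mul_sum]
    refine Finset.sum_congr rfl fun i _ => ?_
    simp only [Pi.smul_apply, smul_eq_mul, mul_pow, inv_pow, hss]
    rw [inv_div]
  rw [e1, e2, e3, e4, ← en_sq x, ← en_sq z, ← hnx, ← hnz] at key
  have : nz / nx * nx ^ 2 + nx / nz * nz ^ 2 = 2 * (nx * nz) := by
    field_simp
    ring
  rw [this] at key
  calc |(∑ i, A.mulVec x i * A.mulVec z i) - ∑ i, x i * z i|
      ≤ δ / 2 * (2 * (nx * nz)) := key
    _ = δ * nx * nz := by ring

lemma sum_sq_le_of_card_le {d : ℕ} (u : Fin d → ℝ) (s₁ s₂ : Finset (Fin d))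
    (hcard : s₁.card ≤ s₂.card)
    (hcomp : ∀ j ∈ s₁, ∀ i ∈ s₂, u j ^ 2 ≤ u i ^ 2) :
    ∑ j ∈ s₁, u j ^ 2 ≤ ∑ i ∈ s₂, u i ^ 2 := by
  rcases s₂.eq_empty_or_nonempty with h2 | h2
  · subst h2
    simp only [Finset.card_empty, Nat.le_zero, Finset.card_eq_zero] at hcard
    subst hcard
    simp
  obtain ⟨a, ha, hamin⟩ := s₂.exists_min_image (fun i => u i ^ 2) h2
  calc ∑ j ∈ s₁, u j ^ 2 ≤ s₁.card • (u a ^ 2) :=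
        Finset.sum_le_card_nsmul s₁ _ _ (fun j hj => hcomp j hj a ha)
    _ ≤ s₂.card • (u a ^ 2) := by
        rw [nsmul_eq_mul, nsmul_eq_mul]
        exact mul_le_mul_of_nonneg_right (Nat.cast_le.2 hcard) (sq_nonneg _)
    _ ≤ ∑ i ∈ s₂, u i ^ 2 := Finset.card_nsmul_le_sum s₂ _ _ (fun i hi => hamin i hi)

lemma minkowski_sq {d : ℕ} (s : Finset (Fin d)) (f g : Fin d → ℝ) (Q : ℝ)
    (hQ : ∑ i ∈ s, g i ^ 2 ≤ Q) :
    ∑ i ∈ s, (f i + g i) ^ 2 ≤ 2 * (∑ i ∈ s, f i ^ 2) + 2 * Q := by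
  have cs := Real.sum_mul_le_sqrt_mul_sqrt s f g
  have h1 : (0:ℝ) ≤ ∑ i ∈ s, f i ^ 2 := by positivity
  have h2 : (0:ℝ) ≤ ∑ i ∈ s, g i ^ 2 := by positivity
  have e : ∑ i ∈ s, (f i + g i) ^ 2
      = (∑ i ∈ s, f i ^ 2) + 2 * (∑ i ∈ s, f i * g i) + ∑ i ∈ s, g i ^ 2 := by
    rw [Finset.mul_sum, ← Finset.sum_add_distrib, ← Finset.sum_add_distrib]
    exact Finset.sum_congr rfl fun i _ => by ring
  nlinarith [Real.sq_sqrt h1, Real.sq_sqrt h2, Real.sqrt_nonneg (∑ i ∈ s, f i ^ 2),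
    Real.sqrt_nonneg (∑ i ∈ s, g i ^ 2),
    sq_nonneg (Real.sqrt (∑ i ∈ s, f i ^ 2) - Real.sqrt (∑ i ∈ s, g i ^ 2))]

lemma sum_split {d : ℕ} (f : Fin d → ℝ) (s t : Finset (Fin d)) :
    ∑ i ∈ s, f i = ∑ i ∈ s \ t, f i + ∑ i ∈ s ∩ t, f i := by
  rw [← Finset.sum_union (Finset.disjoint_sdiff_inter s t), Finset.sdiff_union_inter]

lemma pruning_sum {d K : ℕ} (xS u : Fin d → ℝ) (U T : Finset (Fin d))
    (hxS : (supp xS).card ≤ K) (hTcard : T.card = K)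
    (hu : ∀ i ∉ U, u i = 0)
    (hThresh : ∀ i ∈ T, ∀ j ∉ T, |u j| ≤ |u i|) :
    (∑ i ∈ T, (xS i - u i) ^ 2) + (∑ i ∈ Tᶜ, xS i ^ 2)
      ≤ (∑ i ∈ Uᶜ, xS i ^ 2) + 3 * ∑ i ∈ U, (xS i - u i) ^ 2 := by
  set S := supp xS with hS
  have hxS0 : ∀ i ∉ S, xS i = 0 := by
    intro i hi
    by_contra h
    exact hi (mem_supp.2 h)
  have q1 : ∑ i ∈ T, (xS i - u i) ^ 2
      = (∑ i ∈ T \ U, xS i ^ 2) + ∑ i ∈ T ∩ U, (xS i - u i) ^ 2 := by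
    rw [sum_split (fun i => (xS i - u i) ^ 2) T U]
    congr 1
    refine Finset.sum_congr rfl fun i hi => ?_
    rw [Finset.mem_sdiff] at hi
    rw [hu i hi.2]
    ring
  have q3 : ∑ i ∈ Tᶜ, xS i ^ 2
      = (∑ i ∈ (S \ T) \ U, xS i ^ 2) + ∑ i ∈ (S \ T) ∩ U, xS i ^ 2 := by
    rw [← sum_split (fun i => xS i ^ 2) (S \ T) U]
    rw [sum_split (fun i => xS i ^ 2) Tᶜ S]
    have h0 : ∑ i ∈ Tᶜ \ S, xS i ^ 2 = 0 := by
      refine Finset.sum_eq_zero fun i hi => ?_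
      rw [Finset.mem_sdiff] at hi
      rw [hxS0 i hi.2]
      ring
    rw [h0, zero_add]
    refine Finset.sum_congr ?_ fun i _ => rfl
    ext i
    simp only [Finset.mem_inter, Finset.mem_sdiff, Finset.mem_compl]
    tauto
  have hcard : (S \ T).card ≤ (T \ S).card := by
    have h1 := Finset.card_sdiff_add_card_inter S T
    have h2 := Finset.card_sdiff_add_card_inter T S
    rw [Finset.inter_comm T S] at h2
    omega
  have hthresh2 : ∑ j ∈ S \ T, u j ^ 2 ≤ ∑ i ∈ T \ S, u i ^ 2 := by
    refine sum_sq_le_of_card_le u _ _ hcard fun j hj i hi => ?_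
    rw [Finset.mem_sdiff] at hj hi
    have h := hThresh i hi.1 j hj.2
    calc u j ^ 2 = |u j| ^ 2 := (sq_abs _).symm
      _ ≤ |u i| ^ 2 := pow_le_pow_left₀ (abs_nonneg _) h 2
      _ = u i ^ 2 := sq_abs _
  have hQu : ∑ i ∈ T \ S, u i ^ 2 = ∑ i ∈ (T \ S) ∩ U, (xS i - u i) ^ 2 := by
    rw [sum_split (fun i => u i ^ 2) (T \ S) U]
    have h0 : ∑ i ∈ (T \ S) \ U, u i ^ 2 = 0 := by
      refine Finset.sum_eq_zero fun i hi => ?_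
      rw [Finset.mem_sdiff] at hi
      rw [hu i hi.2]
      ring
    rw [h0, zero_add]
    refine Finset.sum_congr rfl fun i hi => ?_
    rw [Finset.mem_inter, Finset.mem_sdiff] at hi
    rw [hxS0 i hi.1.2]
    ring
  have hB1u : ∑ i ∈ (S \ T) ∩ U, u i ^ 2 ≤ ∑ i ∈ (T \ S) ∩ U, (xS i - u i) ^ 2 := by
    rw [← hQu]
    refine le_trans (Finset.sum_le_sum_of_subset_of_nonneg (Finset.inter_subset_left)
      fun i _ _ => sq_nonneg _) hthresh2
  have q4 : ∑ i ∈ (S \ T) ∩ U, xS i ^ 2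
      ≤ 2 * (∑ i ∈ (S \ T) ∩ U, (xS i - u i) ^ 2)
        + 2 * ∑ i ∈ (T \ S) ∩ U, (xS i - u i) ^ 2 := by
    have he : ∑ i ∈ (S \ T) ∩ U, xS i ^ 2
        = ∑ i ∈ (S \ T) ∩ U, ((xS i - u i) + u i) ^ 2 := by
      refine Finset.sum_congr rfl fun i _ => by ring
    rw [he]
    exact minkowski_sq _ (fun i => xS i - u i) u _ hB1u
  have q5 : (∑ i ∈ T \ U, xS i ^ 2) + ∑ i ∈ (S \ T) \ U, xS i ^ 2
      ≤ ∑ i ∈ Uᶜ, xS i ^ 2 := by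
    have hdis : Disjoint (T \ U) ((S \ T) \ U) := by
      rw [Finset.disjoint_left]
      intro i hi1 hi2
      rw [Finset.mem_sdiff] at hi1 hi2
      exact (Finset.mem_sdiff.1 hi2.1).2 hi1.1
    rw [← Finset.sum_union hdis]
    refine Finset.sum_le_sum_of_subset_of_nonneg ?_ fun i _ _ => sq_nonneg _
    intro i hi
    rw [Finset.mem_union, Finset.mem_sdiff, Finset.mem_sdiff] at hi
    rw [Finset.mem_compl]
    tauto
  have q6 : ∑ i ∈ (T \ S) ∩ U, (xS i - u i) ^ 2 ≤ ∑ i ∈ T ∩ U, (xS i - u i) ^ 2 := by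
    refine Finset.sum_le_sum_of_subset_of_nonneg ?_ fun i _ _ => sq_nonneg _
    intro i hi
    rw [Finset.mem_inter, Finset.mem_sdiff] at hi
    exact Finset.mem_inter.2 ⟨hi.1.1, hi.2⟩
  have q7 : (∑ i ∈ T ∩ U, (xS i - u i) ^ 2) + ∑ i ∈ (S \ T) ∩ U, (xS i - u i) ^ 2
      ≤ ∑ i ∈ U, (xS i - u i) ^ 2 := by
    have hdis : Disjoint (T ∩ U) ((S \ T) ∩ U) := by
      rw [Finset.disjoint_left]
      intro i hi1 hi2
      rw [Finset.mem_inter] at hi1 hi2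
      exact (Finset.mem_sdiff.1 hi2.1).2 hi1.1
    rw [← Finset.sum_union hdis]
    refine Finset.sum_le_sum_of_subset_of_nonneg ?_ fun i _ _ => sq_nonneg _
    intro i hi
    rw [Finset.mem_union, Finset.mem_inter, Finset.mem_inter] at hi
    tauto
  have hR : (0:ℝ) ≤ ∑ i ∈ (S \ T) ∩ U, (xS i - u i) ^ 2 := by positivity
  linarith

lemma sqrt_combine (a p q : ℝ) (ha : 0 ≤ a) (hp : 0 ≤ p) (hq : 0 ≤ q) :
    Real.sqrt (a ^ 2 + 3 * (p + q) ^ 2)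
      ≤ Real.sqrt (a ^ 2 + 3 * p ^ 2) + Real.sqrt 3 * q := by
  rw [Real.sqrt_le_left (by positivity)]
  have h1 : Real.sqrt (a ^ 2 + 3 * p ^ 2) ^ 2 = a ^ 2 + 3 * p ^ 2 :=
    Real.sq_sqrt (by positivity)
  have h3 : Real.sqrt 3 ^ 2 = 3 := Real.sq_sqrt (by norm_num)
  have hkey : 3 * p ≤ Real.sqrt 3 * Real.sqrt (a ^ 2 + 3 * p ^ 2) := by
    calc 3 * p = Real.sqrt ((3 * p) ^ 2) := (Real.sqrt_sq (by positivity)).symm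
      _ ≤ Real.sqrt (3 * (a ^ 2 + 3 * p ^ 2)) :=
          Real.sqrt_le_sqrt (by nlinarith [sq_nonneg a])
      _ = Real.sqrt 3 * Real.sqrt (a ^ 2 + 3 * p ^ 2) := Real.sqrt_mul (by norm_num) _
  have hmul := mul_le_mul_of_nonneg_left hkey (by positivity : (0:ℝ) ≤ 2 * q)
  have h3q : Real.sqrt 3 ^ 2 * q ^ 2 = 3 * q ^ 2 := by rw [h3]
  nlinarith [h1, h3q, hmul]

lemma step2_lemma (V a E H c ρ δ : ℝ) (hV0 : 0 ≤ V) (ha0 : 0 ≤ a) (hE0 : 0 ≤ E)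
    (hH0 : 0 ≤ H) (hc0 : 0 ≤ c) (hδpos : 0 < δ) (hδlt : δ < 1)
    (hρpos : 0 < ρ) (hρ2 : ρ ^ 2 = 1 - δ ^ 2) (hH2 : H ^ 2 = a ^ 2 + V ^ 2)
    (step1 : V ^ 2 ≤ c * E * V + δ * H * V) : V ≤ δ * a / ρ + c * E / (1 - δ) := by
  have h1δ : 0 < 1 - δ := by linarith
  have hδρ : 0 < 1 - δ ^ 2 := by nlinarith
  have hrhs1 : 0 ≤ δ * a / ρ := div_nonneg (mul_nonneg hδpos.le ha0) hρpos.le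
  have hrhs2 : 0 ≤ c * E / (1 - δ) := div_nonneg (mul_nonneg hc0 hE0) h1δ.le
  rcases eq_or_lt_of_le hV0 with hV | hVpos
  · rw [← hV]; linarith
  have hVle : V ≤ c * E + δ * H :=
    le_of_mul_le_mul_right (by nlinarith [step1]) hVpos
  rcases le_or_gt V (c * E / (1 - δ)) with hcase | hcase
  · linarith
  have hm : 0 ≤ c * E := mul_nonneg hc0 hE0
  have hcElt : c * E < (1 - δ) * V := by
    rw [div_lt_iff₀ h1δ] at hcase
    linarith [hcase]
  have hVmpos : 0 < V - c * E := by nlinarith [mul_nonneg hδpos.le hV0]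
  have hq : (V - c * E) ^ 2 ≤ δ ^ 2 * a ^ 2 + δ ^ 2 * V ^ 2 := by
    have h1 : V - c * E ≤ δ * H := by linarith
    have h2 : (V - c * E) ^ 2 ≤ (δ * H) ^ 2 := by
      nlinarith [mul_nonneg hδpos.le hH0]
    nlinarith [hH2]
  have hkey : (ρ ^ 2 * V - c * E) ^ 2 ≤ (δ * a * ρ + δ * (c * E)) ^ 2 := by
    have hq2 : (1 - δ ^ 2) * ((V - c * E) ^ 2) ≤ (1 - δ ^ 2) * (δ ^ 2 * a ^ 2 + δ ^ 2 * V ^ 2) :=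
      mul_le_mul_of_nonneg_left hq hδρ.le
    have haux : 0 ≤ δ * δ * (a * ρ) * (c * E) :=
      mul_nonneg (mul_nonneg (mul_nonneg hδpos.le hδpos.le) (mul_nonneg ha0 hρpos.le)) hm
    rw [hρ2]
    have hrhs : (δ * a * ρ) ^ 2 = (δ * a) ^ 2 * (1 - δ ^ 2) := by
      rw [mul_pow, hρ2]
    nlinarith [hq2, hrhs, haux]
  have hlin : ρ ^ 2 * V - c * E ≤ δ * a * ρ + δ * (c * E) := by
    have h1 : ρ ^ 2 * V - c * E ≤ |ρ ^ 2 * V - c * E| := le_abs_self _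
    have h2 : |ρ ^ 2 * V - c * E| = Real.sqrt ((ρ ^ 2 * V - c * E) ^ 2) :=
      (Real.sqrt_sq_eq_abs _).symm
    have h3 := Real.sqrt_le_sqrt hkey
    have h4 : Real.sqrt ((δ * a * ρ + δ * (c * E)) ^ 2) = δ * a * ρ + δ * (c * E) :=
      Real.sqrt_sq (add_nonneg (mul_nonneg (mul_nonneg hδpos.le ha0) hρpos.le)
        (mul_nonneg hδpos.le hm))
    linarith
  have hfin : (1 - δ ^ 2) * V ≤ δ * a * ρ + (1 + δ) * (c * E) := by
    rw [← hρ2]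
    linarith [hlin]
  have h5 : V ≤ (δ * a * ρ + (1 + δ) * (c * E)) / (1 - δ ^ 2) := by
    rw [le_div_iff₀ hδρ]
    linarith
  have h6 : (δ * a * ρ + (1 + δ) * (c * E)) / (1 - δ ^ 2)
      = δ * a / ρ + c * E / (1 - δ) := by
    have hρsq : ρ * ρ = 1 - δ ^ 2 := by rw [← hρ2]; ring
    have e1 : δ * a * ρ / (1 - δ ^ 2) = δ * a / ρ := by
      rw [← hρsq, mul_div_mul_right _ _ (ne_of_gt hρpos)]
    have e2 : (1 + δ) * (c * E) / (1 - δ ^ 2) = c * E / (1 - δ) := by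
      rw [show (1:ℝ) - δ ^ 2 = (1 + δ) * (1 - δ) by ring,
        mul_div_mul_left _ _ (by linarith : (1:ℝ) + δ ≠ 0)]
    rw [add_div, e1, e2]
  rw [h6] at h5
  exact h5

end Helpers

/-- bound on `‖x_S − x'‖` after the estimation and update steps, where
`x' = H_K(u)` is the hard thresholding of the least-squares solution `u` on `U`. -/
theorem cosamp_estimate_update_bound
    {m d K : ℕ} (A : Matrix (Fin m) (Fin d) ℝ) (xS : Fin d → ℝ) (e : Fin m → ℝ)
    (δ3 δ4 : ℝ)
    (hxS : (supp xS).card ≤ K)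
    (hRIP3 : RIP A (3 * K) δ3) (hRIP4 : RIP A (4 * K) δ4)
    (U : Finset (Fin d)) (hU : U.card ≤ 3 * K)
    (u : Fin d → ℝ) (hLS : LeastSq A (A.mulVec xS + e) U u)
    (T : Finset (Fin d)) (hTcard : T.card = K)
    (hThresh : ∀ i ∈ T, ∀ j ∉ T, |u j| ≤ |u i|)
    (x' : Fin d → ℝ) (hx' : x' = restrict u T) :
    euclNorm (xS - x') ≤
      Real.sqrt ((1 + 2 * δ4 ^ 2) / (1 - δ4 ^ 2)) * euclNorm (restrict xS Uᶜ) +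
        Real.sqrt 3 * (Real.sqrt (1 + δ3) / (1 - δ4)) * euclNorm e := by
  obtain ⟨hLSsupp, hLSorth⟩ := hLS
  have hδ4pos : 0 < δ4 := hRIP4.1
  have hδ4lt : δ4 < 1 := hRIP4.2.1
  have hδ3pos : 0 < δ3 := hRIP3.1
  set a := euclNorm (_root_.restrict xS Uᶜ) with ha_def
  set E := euclNorm e with hE_def
  set w : Fin d → ℝ := _root_.restrict (xS - u) U with hw_def
  set V := euclNorm w with hV_def
  set c := Real.sqrt (1 + δ3) with hc_def
  set ρ := Real.sqrt (1 - δ4 ^ 2) with hρ_def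
  set H := euclNorm (xS - u) with hH_def
  have ha0 : 0 ≤ a := en_nonneg _
  have hV0 : 0 ≤ V := en_nonneg _
  have hE0 : 0 ≤ E := en_nonneg _
  have hH0 : 0 ≤ H := en_nonneg _
  have hc0 : 0 ≤ c := Real.sqrt_nonneg _
  have hδρ : 0 < 1 - δ4 ^ 2 := by nlinarith
  have h1δ4 : 0 < 1 - δ4 := by linarith
  have hρpos : 0 < ρ := Real.sqrt_pos.2 hδρ
  have hρ2 : ρ ^ 2 = 1 - δ4 ^ 2 := Real.sq_sqrt hδρ.le
  have hc2 : c ^ 2 = 1 + δ3 := Real.sq_sqrt (by linarith)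
  have hu0 : ∀ i ∉ U, u i = 0 := fun i hi => supp_zero_outside hLSsupp hi
  -- basic squared-norm identities
  have ha2 : a ^ 2 = ∑ i ∈ Uᶜ, xS i ^ 2 := by
    rw [ha_def, en_sq, sum_sq_restrict]
  have hV2 : V ^ 2 = ∑ i ∈ U, (xS i - u i) ^ 2 := by
    rw [hV_def, en_sq, hw_def, sum_sq_restrict]
    exact Finset.sum_congr rfl fun i _ => by rw [Pi.sub_apply]
  have hH2 : H ^ 2 = a ^ 2 + V ^ 2 := by
    have e1 : ∑ i ∈ Uᶜ, (xS i - u i) ^ 2 = ∑ i ∈ Uᶜ, xS i ^ 2 :=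
      Finset.sum_congr rfl fun i hi => by rw [hu0 i (Finset.mem_compl.1 hi)]; ring
    calc H ^ 2 = ∑ i, (xS i - u i) ^ 2 := by
          rw [hH_def, en_sq]
          exact Finset.sum_congr rfl fun i _ => by rw [Pi.sub_apply]
      _ = (∑ i ∈ U, (xS i - u i) ^ 2) + ∑ i ∈ Uᶜ, (xS i - u i) ^ 2 :=
          (Finset.sum_add_sum_compl U _).symm
      _ = a ^ 2 + V ^ 2 := by rw [e1, ← ha2, ← hV2]; ring
  -- pruning step
  have hF2 : euclNorm (xS - x') ^ 2 ≤ a ^ 2 + 3 * V ^ 2 := by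
    have hpr := pruning_sum xS u U T hxS hTcard hu0 hThresh
    have eF : euclNorm (xS - x') ^ 2
        = (∑ i ∈ T, (xS i - u i) ^ 2) + ∑ i ∈ Tᶜ, xS i ^ 2 := by
      rw [en_sq, ← Finset.sum_add_sum_compl T]
      congr 1
      · refine Finset.sum_congr rfl fun i hi => ?_
        rw [Pi.sub_apply, hx']
        simp [_root_.restrict, hi]
      · refine Finset.sum_congr rfl fun i hi => ?_
        have hiT : i ∉ T := Finset.mem_compl.1 hi
        rw [Pi.sub_apply, hx']
        simp [_root_.restrict, hiT]
    rw [eF, ha2.symm] at *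
    rw [← hV2] at hpr
    linarith
  -- estimation step
  have hsupp_w : supp w ⊆ U := by rw [hw_def]; exact supp_restrict _ _
  have hAw : euclNorm (A.mulVec w) ≤ c * V := by
    have hb := (hRIP3.2.2 w (le_trans (Finset.card_le_card hsupp_w) hU)).2
    rw [← hV_def] at hb
    nlinarith [en_nonneg (A.mulVec w), mul_nonneg hc0 hV0, hc2]
  have horto : ∑ i, A.mulVec (xS - u) i * A.mulVec w i = - ∑ i, e i * A.mulVec w i := by
    have h0 := hLSorth w hsupp_w
    have h1 : ∑ i, (A.mulVec (xS - u) i * A.mulVec w i + e i * A.mulVec w i) = 0 := by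
      rw [← h0]
      refine Finset.sum_congr rfl fun i _ => ?_
      rw [Matrix.mulVec_sub]
      simp only [Pi.add_apply, Pi.sub_apply]
      ring
    rw [Finset.sum_add_distrib] at h1
    linarith
  have hinner : ∑ i, (xS - u) i * w i = V ^ 2 := by
    rw [← Finset.sum_add_sum_compl U]
    have z1 : ∑ i ∈ Uᶜ, (xS - u) i * w i = 0 := by
      refine Finset.sum_eq_zero fun i hi => ?_
      have hiU : i ∉ U := Finset.mem_compl.1 hi
      rw [hw_def]
      simp [_root_.restrict, hiU]
    have z2 : ∑ i ∈ U, (xS - u) i * w i = ∑ i ∈ U, (xS i - u i) ^ 2 := by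
      refine Finset.sum_congr rfl fun i hi => ?_
      rw [hw_def]
      simp only [_root_.restrict, Pi.sub_apply, if_pos hi]
      ring
    rw [z1, z2, ← hV2, add_zero]
  have hcard_hw : ((supp (xS - u)) ∪ supp w).card ≤ 4 * K := by
    have h1 : supp (xS - u) ∪ supp w ⊆ supp xS ∪ U := by
      intro i hi
      rcases Finset.mem_union.1 hi with h | h
      · rcases Finset.mem_union.1 (supp_sub xS u h) with h' | h'
        · exact Finset.mem_union.2 (Or.inl h')
        · exact Finset.mem_union.2 (Or.inr (hLSsupp h'))
      · exact Finset.mem_union.2 (Or.inr (hsupp_w h))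
    calc ((supp (xS - u)) ∪ supp w).card ≤ (supp xS ∪ U).card := Finset.card_le_card h1
      _ ≤ (supp xS).card + U.card := Finset.card_union_le _ _
      _ ≤ 4 * K := by omega
  have hpolar := rip_polar hRIP4 (xS - u) w hcard_hw
  rw [horto, hinner, ← hH_def, ← hV_def] at hpolar
  have hCS : |∑ i, e i * A.mulVec w i| ≤ E * euclNorm (A.mulVec w) := by
    rw [abs_le]
    constructor
    · have hneg := Real.sum_mul_le_sqrt_mul_sqrt Finset.univ (fun i => -e i) (A.mulVec w)
      have : ∑ i, (fun i => -e i) i * A.mulVec w i = -∑ i, e i * A.mulVec w i := by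
        rw [← Finset.sum_neg_distrib]
        exact Finset.sum_congr rfl fun i _ => by ring
      rw [this] at hneg
      have heq : Real.sqrt (∑ i, (fun i => -e i) i ^ 2) = E := by
        rw [hE_def]
        unfold euclNorm
        congr 1
        exact Finset.sum_congr rfl fun i _ => by ring
      rw [heq] at hneg
      have hen : euclNorm (A.mulVec w) = Real.sqrt (∑ i, A.mulVec w i ^ 2) := rfl
      rw [hen]
      linarith [hneg]
    · have hpos := Real.sum_mul_le_sqrt_mul_sqrt Finset.univ e (A.mulVec w)
      exact hpos
  have step1 : V ^ 2 ≤ c * E * V + δ4 * H * V := by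
    have habs := abs_le.1 hpolar
    have habs2 := abs_le.1 hCS
    have hAwE : E * euclNorm (A.mulVec w) ≤ E * (c * V) :=
      mul_le_mul_of_nonneg_left hAw hE0
    linarith [habs.1, habs.2, habs2.1, habs2.2, hAwE]
  clear_value a E w V c ρ H
  clear ha_def hE_def hw_def hV_def hc_def hρ_def hH_def hu0 ha2 hV2 hAw hsupp_w horto
    hinner hcard_hw hpolar hCS hLSsupp hLSorth hThresh hx' hxS hU hTcard
  clear w u T U
  have step2 : V ≤ δ4 * a / ρ + c * E / (1 - δ4) :=
    step2_lemma V a E H c ρ δ4 hV0 ha0 hE0 hH0 hc0 hδ4pos hδ4lt hρpos hρ2 hH2 step1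
  -- final combination
  set p := δ4 * a / ρ with hp_def
  set q := c * E / (1 - δ4) with hq_def
  have hp0 : 0 ≤ p := div_nonneg (mul_nonneg hδ4pos.le ha0) hρpos.le
  have hq0 : 0 ≤ q := div_nonneg (mul_nonneg hc0 hE0) h1δ4.le
  have hF : euclNorm (xS - x') ≤ Real.sqrt (a ^ 2 + 3 * V ^ 2) := by
    rw [← Real.sqrt_sq (en_nonneg (xS - x'))]
    exact Real.sqrt_le_sqrt hF2
  have hVpq : V ^ 2 ≤ (p + q) ^ 2 := by
    have := pow_le_pow_left₀ hV0 step2 2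
    rw [hp_def, hq_def]
    exact this
  have hmono : Real.sqrt (a ^ 2 + 3 * V ^ 2) ≤ Real.sqrt (a ^ 2 + 3 * (p + q) ^ 2) :=
    Real.sqrt_le_sqrt (by linarith [hVpq])
  have hcomb := sqrt_combine a p q ha0 hp0 hq0
  have hp2 : p ^ 2 = (δ4 * a) ^ 2 / (1 - δ4 ^ 2) := by
    rw [hp_def, div_pow, hρ2]
  have hpa : a ^ 2 + 3 * p ^ 2 = ((1 + 2 * δ4 ^ 2) / (1 - δ4 ^ 2)) * a ^ 2 := by
    rw [hp2]
    field_simp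
    ring
  have hsqa : Real.sqrt (a ^ 2 + 3 * p ^ 2)
      = Real.sqrt ((1 + 2 * δ4 ^ 2) / (1 - δ4 ^ 2)) * a := by
    rw [hpa, Real.sqrt_mul (div_nonneg (by positivity) hδρ.le), Real.sqrt_sq ha0]
  have hq3 : Real.sqrt 3 * q = Real.sqrt 3 * (c / (1 - δ4)) * E := by
    rw [hq_def]
    ring
  calc euclNorm (xS - x') ≤ Real.sqrt (a ^ 2 + 3 * (p + q) ^ 2) := le_trans hF hmono
    _ ≤ Real.sqrt (a ^ 2 + 3 * p ^ 2) + Real.sqrt 3 * q := hcomb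
    _ = Real.sqrt ((1 + 2 * δ4 ^ 2) / (1 - δ4 ^ 2)) * a
        + Real.sqrt 3 * (c / (1 - δ4)) * E := by rw [hsqa, hq3]
end

section
/- Let y = A·x_S + e where x_S ∈ ℝⁿ is K-sparse with support S, and A satisfies the RIP of order 4K with constant δ_{4K}. Let x' ∈ ℝⁿ be K-sparse with support S', and let h be a set of 2K indices such that |(Aᵀ(y − A x'))_i| ≥ |(Aᵀ(y − A x'))_j| for every i ∈ h and j ∉ h. Then ‖(x_S − x')_{\overline{h}}‖ ≤ √2·δ_{4K}·‖x_S − x'‖ + √(2(1+δ_{4K}))·‖e‖. -/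
open Finset

namespace CoSaMPAux

variable {m d : ℕ}

lemma euclNorm_nonneg (x : Fin d → ℝ) : 0 ≤ euclNorm x := Real.sqrt_nonneg _

lemma euclNorm_sq (x : Fin d → ℝ) : euclNorm x ^ 2 = ∑ i, x i ^ 2 :=
  Real.sq_sqrt (by positivity)

lemma euclNorm_mono {x y : Fin d → ℝ} (hle : ∑ i, x i ^ 2 ≤ ∑ i, y i ^ 2) :
    euclNorm x ≤ euclNorm y := Real.sqrt_le_sqrt hle

lemma sum_mul_le (x y : Fin d → ℝ) : ∑ i, x i * y i ≤ euclNorm x * euclNorm y := by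
  have h := sum_mul_sq_le_sq_mul_sq Finset.univ x y
  have h2 : ∑ i, x i * y i ≤ |∑ i, x i * y i| := le_abs_self _
  refine h2.trans ?_
  rw [← Real.sqrt_sq_eq_abs]
  unfold euclNorm
  rw [← Real.sqrt_mul (by positivity)]
  exact Real.sqrt_le_sqrt h

lemma euclNorm_add_le (x y : Fin d → ℝ) :
    euclNorm (fun i => x i + y i) ≤ euclNorm x + euclNorm y := by
  have hcs := sum_mul_le x y
  have h1 : euclNorm (fun i => x i + y i) ^ 2 ≤ (euclNorm x + euclNorm y) ^ 2 := by
    rw [euclNorm_sq]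
    have : ∑ i, (x i + y i) ^ 2 = (∑ i, x i ^ 2) + 2 * (∑ i, x i * y i) + ∑ i, y i ^ 2 := by
      rw [Finset.mul_sum, ← Finset.sum_add_distrib, ← Finset.sum_add_distrib]
      exact Finset.sum_congr rfl fun i _ => by ring
    rw [this, ← euclNorm_sq x, ← euclNorm_sq y]
    nlinarith
  have h2 := Real.sqrt_le_sqrt h1
  rwa [Real.sqrt_sq (euclNorm_nonneg _), Real.sqrt_sq (add_nonneg (euclNorm_nonneg x) (euclNorm_nonneg y))] at h2

lemma supp_subset_of {x y : Fin d → ℝ} (hxy : ∀ i, y i ≠ 0 → x i ≠ 0) :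
    supp y ⊆ supp x := by
  intro i hi
  simp only [supp, Finset.mem_filter, Finset.mem_univ, true_and] at *
  exact hxy i hi

lemma supp_restrict (x : Fin d → ℝ) (T : Finset (Fin d)) : supp (restrict x T) ⊆ T := by
  intro i hi
  simp only [supp, _root_.restrict, Finset.mem_filter, Finset.mem_univ, true_and] at hi
  by_contra hc
  simp [_root_.restrict, hc] at hi

lemma sum_restrict_sq (x : Fin d → ℝ) (T : Finset (Fin d)) :
    ∑ i, (_root_.restrict x T) i ^ 2 = ∑ i ∈ T, x i ^ 2 := by
  rw [← Finset.sum_filter_add_sum_filter_not Finset.univ (· ∈ T)]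
  have h1 : ∑ i ∈ Finset.univ.filter (· ∈ T), (_root_.restrict x T) i ^ 2
      = ∑ i ∈ T, x i ^ 2 := by
    rw [Finset.filter_mem_eq_inter, Finset.univ_inter]
    exact Finset.sum_congr rfl fun i hi => by simp [_root_.restrict, hi]
  have h2 : ∑ i ∈ Finset.univ.filter (¬ · ∈ T), (_root_.restrict x T) i ^ 2 = 0 := by
    apply Finset.sum_eq_zero
    intro i hi
    simp only [Finset.mem_filter] at hi
    simp [_root_.restrict, hi.2]
  rw [h1, h2, add_zero]

/-- transpose identity -/
lemma transpose_sum (A : Matrix (Fin m) (Fin d) ℝ) (z : Fin m → ℝ) (y : Fin d → ℝ) :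
    ∑ i, A.transpose.mulVec z i * y i = ∑ j, z j * A.mulVec y j := by
  simp only [Matrix.mulVec, dotProduct, Matrix.transpose_apply, Finset.sum_mul,
    Finset.mul_sum]
  rw [Finset.sum_comm]
  exact Finset.sum_congr rfl fun j _ => Finset.sum_congr rfl fun i _ => by ring


lemma supp_pair_subset {x y f : Fin d → ℝ} (hf : ∀ i, x i = 0 → y i = 0 → f i = 0) :
    supp f ⊆ supp x ∪ supp y := by
  intro i hi
  simp only [supp, Finset.mem_filter, Finset.mem_univ, true_and, Finset.mem_union] at *
  by_contra hc
  push_neg at hc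
  exact hi (hf i hc.1 hc.2)

lemma sum_sq_expand (f g : Fin d → ℝ) :
    ∑ i, (f i + g i) ^ 2 = (∑ i, f i ^ 2) + 2 * (∑ i, f i * g i) + ∑ i, g i ^ 2 := by
  rw [Finset.mul_sum, ← Finset.sum_add_distrib, ← Finset.sum_add_distrib]
  exact Finset.sum_congr rfl fun i _ => by ring

lemma sum_sq_expand' (f g : Fin d → ℝ) :
    ∑ i, (f i - g i) ^ 2 = (∑ i, f i ^ 2) - 2 * (∑ i, f i * g i) + ∑ i, g i ^ 2 := by
  have := sum_sq_expand f (fun i => -g i)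
  simp only [mul_neg, neg_sq, Finset.sum_neg_distrib] at this
  calc ∑ i, (f i - g i) ^ 2 = ∑ i, (f i + -g i) ^ 2 := by
        exact Finset.sum_congr rfl fun i _ => by ring
    _ = _ := by rw [this]; ring_nf
    
lemma mulVec_fun_add (A : Matrix (Fin m) (Fin d) ℝ) (x y : Fin d → ℝ) :
    A.mulVec (fun i => x i + y i) = fun j => A.mulVec x j + A.mulVec y j := by
  funext j
  simp only [Matrix.mulVec, dotProduct, mul_add]
  exact Finset.sum_add_distrib

lemma mulVec_fun_sub (A : Matrix (Fin m) (Fin d) ℝ) (x y : Fin d → ℝ) :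
    A.mulVec (fun i => x i - y i) = fun j => A.mulVec x j - A.mulVec y j := by
  funext j
  simp only [Matrix.mulVec, dotProduct, mul_sub]
  exact Finset.sum_sub_distrib _ _

lemma mulVec_fun_smul (A : Matrix (Fin m) (Fin d) ℝ) (c : ℝ) (x : Fin d → ℝ) :
    A.mulVec (fun i => c * x i) = fun j => c * A.mulVec x j := by
  funext j
  simp only [Matrix.mulVec, dotProduct, Finset.mul_sum]
  exact Finset.sum_congr rfl fun i _ => by ring

lemma rip_bilinear_aux {L : ℕ} {δ : ℝ} {A : Matrix (Fin m) (Fin d) ℝ} (hA : RIP A L δ)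
    (x y : Fin d → ℝ) (hcard : (supp x ∪ supp y).card ≤ L) :
    |(∑ j, A.mulVec x j * A.mulVec y j) - ∑ i, x i * y i| * 2
      ≤ δ * ((∑ i, x i ^ 2) + ∑ i, y i ^ 2) := by
  have hc1 : (supp (fun i => x i + y i)).card ≤ L := by
    refine le_trans (Finset.card_le_card (supp_pair_subset ?_)) hcard
    intro i h1 h2; rw [h1, h2]; ring
  have hc2 : (supp (fun i => x i - y i)).card ≤ L := by
    refine le_trans (Finset.card_le_card (supp_pair_subset ?_)) hcard
    intro i h1 h2; rw [h1, h2]; ring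
  have H1 := hA.2.2 _ hc1
  have H2 := hA.2.2 _ hc2
  rw [euclNorm_sq, euclNorm_sq, mulVec_fun_add] at H1
  rw [euclNorm_sq, euclNorm_sq, mulVec_fun_sub] at H2
  rw [sum_sq_expand, sum_sq_expand (A.mulVec x) (A.mulVec y)] at H1
  rw [sum_sq_expand', sum_sq_expand' (A.mulVec x) (A.mulVec y)] at H2
  obtain ⟨H1a, H1b⟩ := H1
  obtain ⟨H2a, H2b⟩ := H2
  rcases abs_cases ((∑ j, A.mulVec x j * A.mulVec y j) - ∑ i, x i * y i) with hc | hc <;>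
    rw [hc.1] <;> nlinarith [H1a, H1b, H2a, H2b]

lemma sum_sq_eq_zero {x : Fin d → ℝ} (hx : euclNorm x = 0) : ∀ i, x i = 0 := by
  intro i
  have h0 : ∑ j, x j ^ 2 = 0 := by
    have := euclNorm_sq x
    rw [hx] at this; simpa using this.symm
  have := (Finset.sum_eq_zero_iff_of_nonneg (fun j _ => sq_nonneg (x j))).mp h0 i
    (Finset.mem_univ i)
  exact (pow_eq_zero_iff two_ne_zero).mp this

lemma rip_bilinear {L : ℕ} {δ : ℝ} {A : Matrix (Fin m) (Fin d) ℝ} (hA : RIP A L δ)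
    (x y : Fin d → ℝ) (hcard : (supp x ∪ supp y).card ≤ L) :
    |(∑ j, A.mulVec x j * A.mulVec y j) - ∑ i, x i * y i|
      ≤ δ * euclNorm x * euclNorm y := by
  set nx := euclNorm x with hnx
  set ny := euclNorm y with hny
  by_cases h0 : nx = 0
  · have hz := sum_sq_eq_zero h0
    have hx0 : x = fun _ => 0 := funext hz
    have : A.mulVec x = fun _ => 0 := by
      funext j; simp [Matrix.mulVec, dotProduct, hz]
    rw [this, hx0]
    simp [h0]
  by_cases h0' : ny = 0
  · have hz := sum_sq_eq_zero h0'
    have hy0 : y = fun _ => 0 := funext hz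
    have : A.mulVec y = fun _ => 0 := by
      funext j; simp [Matrix.mulVec, dotProduct, hz]
    rw [this, hy0]
    simp [h0']
  have hnxpos : 0 < nx := lt_of_le_of_ne (euclNorm_nonneg x) (Ne.symm h0)
  have hnypos : 0 < ny := lt_of_le_of_ne (euclNorm_nonneg y) (Ne.symm h0')
  have hcard' : (supp (fun i => ny * x i) ∪ supp (fun i => nx * y i)).card ≤ L := by
    refine le_trans (Finset.card_le_card (Finset.union_subset_union ?_ ?_)) hcard
    · exact supp_subset_of fun i hi => fun hx => hi (by rw [hx]; ring)
    · exact supp_subset_of fun i hi => fun hy => hi (by rw [hy]; ring)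
  have Haux := rip_bilinear_aux hA (fun i => ny * x i) (fun i => nx * y i) hcard'
  rw [mulVec_fun_smul, mulVec_fun_smul] at Haux
  beta_reduce at Haux
  have e1 : ∑ j, (ny * A.mulVec x j) * (nx * A.mulVec y j)
      = nx * ny * ∑ j, A.mulVec x j * A.mulVec y j := by
    rw [Finset.mul_sum]; exact Finset.sum_congr rfl fun j _ => by ring
  have e2 : ∑ i, (ny * x i) * (nx * y i) = nx * ny * ∑ i, x i * y i := by
    rw [Finset.mul_sum]; exact Finset.sum_congr rfl fun i _ => by ring
  have e3 : ∑ i, (ny * x i) ^ 2 = ny ^ 2 * nx ^ 2 := by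
    have := euclNorm_sq x
    calc ∑ i, (ny * x i) ^ 2 = ny ^ 2 * ∑ i, x i ^ 2 := by
          rw [Finset.mul_sum]; exact Finset.sum_congr rfl fun i _ => by ring
      _ = ny ^ 2 * nx ^ 2 := by rw [← this]
  have e4 : ∑ i, (nx * y i) ^ 2 = nx ^ 2 * ny ^ 2 := by
    have := euclNorm_sq y
    calc ∑ i, (nx * y i) ^ 2 = nx ^ 2 * ∑ i, y i ^ 2 := by
          rw [Finset.mul_sum]; exact Finset.sum_congr rfl fun i _ => by ring
      _ = nx ^ 2 * ny ^ 2 := by rw [← this]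
  rw [e1, e2, e3, e4, ← mul_sub, abs_mul,
    abs_of_pos (mul_pos hnxpos hnypos)] at Haux
  have hδ : 0 ≤ δ := le_of_lt hA.1
  nlinarith [Haux, mul_pos hnxpos hnypos,
    abs_nonneg ((∑ j, A.mulVec x j * A.mulVec y j) - ∑ i, x i * y i)]


lemma le_of_sq_le_sq {a b : ℝ} (hsq : a ^ 2 ≤ b ^ 2) (hb : 0 ≤ b) : a ≤ b := by
  nlinarith [sq_nonneg (a - b), sq_nonneg (a + b)]

lemma rip_offdiag {L : ℕ} {δ : ℝ} {A : Matrix (Fin m) (Fin d) ℝ} (hA : RIP A L δ)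
    (x : Fin d → ℝ) (Ω : Finset (Fin d)) (hcard : (supp x ∪ Ω).card ≤ L) :
    euclNorm (restrict (fun i => A.transpose.mulVec (A.mulVec x) i - x i) Ω)
      ≤ δ * euclNorm x := by
  set w : Fin d → ℝ := fun i => A.transpose.mulVec (A.mulVec x) i - x i with hw
  set g : Fin d → ℝ := _root_.restrict w Ω with hg
  have hsg : supp g ⊆ Ω := supp_restrict w Ω
  have hcard' : (supp x ∪ supp g).card ≤ L :=
    le_trans (Finset.card_le_card (Finset.union_subset_union (Finset.Subset.refl _) hsg)) hcard
  have hpt : ∀ i, g i ^ 2 = w i * g i := by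
    intro i
    by_cases hi : i ∈ Ω
    · simp only [hg, _root_.restrict, if_pos hi]; ring
    · simp only [hg, _root_.restrict, if_neg hi]; ring
  have key : euclNorm g ^ 2
      = (∑ j, A.mulVec x j * A.mulVec g j) - ∑ i, x i * g i := by
    rw [euclNorm_sq]
    have e1 : ∑ i, g i ^ 2 = ∑ i, w i * g i := Finset.sum_congr rfl fun i _ => hpt i
    have e2 : ∑ i, w i * g i
        = (∑ i, A.transpose.mulVec (A.mulVec x) i * g i) - ∑ i, x i * g i := by
      rw [← Finset.sum_sub_distrib]
      exact Finset.sum_congr rfl fun i _ => by simp only [hw]; ring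
    rw [e1, e2, transpose_sum]
  have hbl := rip_bilinear hA x g hcard'
  have hkey2 : euclNorm g ^ 2 ≤ δ * euclNorm x * euclNorm g := by
    rw [key]
    exact le_trans (le_abs_self _) hbl
  rcases eq_or_lt_of_le (euclNorm_nonneg g) with hg0 | hg0
  · rw [← hg0]
    exact mul_nonneg (le_of_lt hA.1) (euclNorm_nonneg x)
  · nlinarith [hkey2, hg0]

lemma rip_noise {L : ℕ} {δ : ℝ} {A : Matrix (Fin m) (Fin d) ℝ} (hA : RIP A L δ)
    (e : Fin m → ℝ) (Ω : Finset (Fin d)) (hΩ : Ω.card ≤ L) :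
    euclNorm (restrict (A.transpose.mulVec e) Ω) ≤ Real.sqrt (1 + δ) * euclNorm e := by
  set g : Fin d → ℝ := _root_.restrict (A.transpose.mulVec e) Ω with hg
  have hsg : (supp g).card ≤ L :=
    le_trans (Finset.card_le_card (supp_restrict _ Ω)) hΩ
  have hδ1 : (0:ℝ) ≤ 1 + δ := by nlinarith [hA.1]
  have hAg : euclNorm (A.mulVec g) ≤ Real.sqrt (1 + δ) * euclNorm g := by
    apply le_of_sq_le_sq _ (mul_nonneg (Real.sqrt_nonneg _) (euclNorm_nonneg g))
    rw [mul_pow, Real.sq_sqrt hδ1]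
    exact (hA.2.2 g hsg).2
  have hpt : ∀ i, g i ^ 2 = A.transpose.mulVec e i * g i := by
    intro i
    by_cases hi : i ∈ Ω
    · simp only [hg, _root_.restrict, if_pos hi]; ring
    · simp only [hg, _root_.restrict, if_neg hi]; ring
  have key : euclNorm g ^ 2 = ∑ j, e j * A.mulVec g j := by
    rw [euclNorm_sq, ← transpose_sum]
    exact Finset.sum_congr rfl fun i _ => hpt i
  have hkey2 : euclNorm g ^ 2 ≤ euclNorm e * (Real.sqrt (1 + δ) * euclNorm g) := by
    rw [key]
    refine le_trans (sum_mul_le e (A.mulVec g)) ?_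
    exact mul_le_mul_of_nonneg_left hAg (euclNorm_nonneg e)
  rcases eq_or_lt_of_le (euclNorm_nonneg g) with hg0 | hg0
  · rw [← hg0]
    exact mul_nonneg (Real.sqrt_nonneg _) (euclNorm_nonneg e)
  · nlinarith [hkey2, hg0, euclNorm_nonneg e]

lemma sum_le_sum_of_min {P Q : Finset (Fin d)} (f : Fin d → ℝ)
    (hf : ∀ i, 0 ≤ f i) (hcard : P.card ≤ Q.card)
    (hle : ∀ j ∈ P, ∀ i ∈ Q, f j ≤ f i) :
    ∑ j ∈ P, f j ≤ ∑ i ∈ Q, f i := by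
  rcases Q.eq_empty_or_nonempty with hQ | hQ
  · have hP : P = ∅ := Finset.card_eq_zero.mp
      (Nat.le_zero.mp (by simpa [hQ] using hcard))
    simp [hP, hQ]
  · obtain ⟨i0, hi0, hmin⟩ := Q.exists_min_image f hQ
    calc ∑ j ∈ P, f j ≤ ∑ _j ∈ P, f i0 :=
          Finset.sum_le_sum fun j hj => hle j hj i0 hi0
      _ = (P.card : ℝ) * f i0 := by rw [Finset.sum_const, nsmul_eq_mul]
      _ ≤ (Q.card : ℝ) * f i0 :=
          mul_le_mul_of_nonneg_right (Nat.cast_le.mpr hcard) (hf i0)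
      _ ≤ ∑ i ∈ Q, f i := by
          have := Finset.card_nsmul_le_sum Q f (f i0) hmin
          rwa [nsmul_eq_mul] at this

lemma add_le_sqrt_two_mul {a b : ℝ} :
    a + b ≤ Real.sqrt 2 * Real.sqrt (a ^ 2 + b ^ 2) := by
  rw [← Real.sqrt_mul (by norm_num)]
  calc a + b ≤ |a + b| := le_abs_self _
    _ = Real.sqrt ((a + b) ^ 2) := (Real.sqrt_sq_eq_abs _).symm
    _ ≤ Real.sqrt (2 * (a ^ 2 + b ^ 2)) :=
        Real.sqrt_le_sqrt (by nlinarith [sq_nonneg (a - b)])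


lemma euclNorm_neg (x : Fin d → ℝ) : euclNorm (fun i => -(x i)) = euclNorm x := by
  unfold euclNorm
  congr 1
  exact Finset.sum_congr rfl fun i _ => by ring

end CoSaMPAux

open CoSaMPAux

/-- identification-step bound of CoSaMP. -/
theorem cosamp_identification_bound
    {m d K : ℕ} (A : Matrix (Fin m) (Fin d) ℝ) (xS x' : Fin d → ℝ) (e : Fin m → ℝ)
    (δ4 : ℝ)
    (S S' : Finset (Fin d))
    (hxS : supp xS ⊆ S) (hScard : S.card ≤ K)
    (hx' : supp x' ⊆ S') (hS'card : S'.card ≤ K)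
    (hRIP4 : RIP A (4 * K) δ4)
    (h : Finset (Fin d)) (hhcard : h.card = 2 * K)
    (hident : ∀ i ∈ h, ∀ j ∉ h,
      |A.transpose.mulVec (A.mulVec xS + e - A.mulVec x') j| ≤
        |A.transpose.mulVec (A.mulVec xS + e - A.mulVec x') i|) :
    euclNorm (restrict (xS - x') hᶜ) ≤
      Real.sqrt 2 * δ4 * euclNorm (xS - x') +
        Real.sqrt (2 * (1 + δ4)) * euclNorm e := by
  classical
  set r : Fin d → ℝ := xS - x' with hrdef
  set T : Finset (Fin d) := S ∪ S' with hTdef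
  have hrz : ∀ i, i ∉ T → r i = 0 := by
    intro i hi
    rw [hTdef, Finset.mem_union] at hi
    push_neg at hi
    have h1 : xS i = 0 := by
      by_contra hne
      exact hi.1 (hxS (by simp [supp, hne]))
    have h2 : x' i = 0 := by
      by_contra hne
      exact hi.2 (hx' (by simp [supp, hne]))
    show xS i - x' i = 0
    rw [h1, h2]; ring
  have hsuppr : supp r ⊆ T := by
    intro i hi
    simp only [supp, Finset.mem_filter, Finset.mem_univ, true_and] at hi
    by_contra hc
    exact hi (hrz i hc)
  have hTcard : T.card ≤ 2 * K :=
    le_trans (Finset.card_union_le S S') (by omega)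
  set u : Fin d → ℝ := A.transpose.mulVec (A.mulVec xS + e - A.mulVec x') with hudef
  set w1 : Fin d → ℝ := fun i => A.transpose.mulVec (A.mulVec r) i - r i with hw1def
  set w2 : Fin d → ℝ := A.transpose.mulVec e with hw2def
  set v : Fin d → ℝ := fun i => w1 i + w2 i with hvdef
  have huv : ∀ i, u i = r i + v i := by
    intro i
    have harg : A.mulVec xS + e - A.mulVec x' = A.mulVec r + e := by
      rw [hrdef, Matrix.mulVec_sub]
      funext j
      simp only [Pi.add_apply, Pi.sub_apply]
      ring
    rw [hudef, harg, Matrix.mulVec_add, hvdef, hw1def, hw2def]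
    simp only [Pi.add_apply]
    ring
  set P : Finset (Fin d) := T \ h with hPdef
  set Q : Finset (Fin d) := h \ T with hQdef
  set Ω : Finset (Fin d) := P ∪ Q with hΩdef
  have hPQdisj : Disjoint P Q := by
    rw [Finset.disjoint_left]
    intro i hiP hiQ
    rw [hPdef, Finset.mem_sdiff] at hiP
    rw [hQdef, Finset.mem_sdiff] at hiQ
    exact hiP.2 hiQ.1
  have hPQcard : P.card ≤ Q.card := by
    rw [hPdef, hQdef]
    have h1 := Finset.card_sdiff_add_card_inter T h
    have h2 := Finset.card_sdiff_add_card_inter h T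
    have h3 : (T ∩ h).card = (h ∩ T).card := by rw [Finset.inter_comm]
    have h4 : T.card ≤ h.card := by omega
    omega
  have hΩTh : Ω ⊆ T ∪ h := by
    rw [hΩdef, hPdef, hQdef]
    intro i hi
    rw [Finset.mem_union] at hi ⊢
    rcases hi with hi | hi
    · exact Or.inl (Finset.mem_sdiff.mp hi).1
    · exact Or.inr (Finset.mem_sdiff.mp hi).1
  have hThcard : (T ∪ h).card ≤ 4 * K :=
    le_trans (Finset.card_union_le T h) (by omega)
  have hΩcard : Ω.card ≤ 4 * K :=
    le_trans (Finset.card_le_card hΩTh) hThcard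
  -- Step 1 : restrict r hᶜ = restrict r P
  have step1 : restrict r hᶜ = restrict r P := by
    funext i
    simp only [_root_.restrict, Finset.mem_compl, hPdef, Finset.mem_sdiff]
    by_cases hih : i ∈ h
    · simp [hih]
    · by_cases hiT : i ∈ T
      · simp [hih, hiT]
      · simp [hih, hiT, hrz i hiT]
  -- Step 2 : triangle on P
  have step2 : euclNorm (restrict r P) ≤ euclNorm (restrict u P) + euclNorm (restrict v P) := by
    have hfun : restrict r P = fun i => restrict u P i + -(restrict v P i) := by
      funext i
      simp only [_root_.restrict]
      by_cases hi : i ∈ P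
      · simp only [if_pos hi]
        have := huv i
        linarith
      · simp only [if_neg hi]; ring
    rw [hfun]
    refine le_trans (euclNorm_add_le _ _) ?_
    rw [euclNorm_neg]
  -- Step 3 : ‖u_P‖ ≤ ‖u_Q‖
  have step3 : euclNorm (restrict u P) ≤ euclNorm (restrict u Q) := by
    apply euclNorm_mono
    rw [sum_restrict_sq, sum_restrict_sq]
    apply sum_le_sum_of_min (fun i => u i ^ 2) (fun i => sq_nonneg _) hPQcard
    intro j hj i hi
    have hjh : j ∉ h := (Finset.mem_sdiff.mp hj).2
    have hih : i ∈ h := (Finset.mem_sdiff.mp hi).1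
    have habs := hident i hih j hjh
    have := pow_le_pow_left₀ (abs_nonneg (u j)) habs 2
    simpa [sq_abs] using this
  -- Step 4 : restrict u Q = restrict v Q
  have step4 : restrict u Q = restrict v Q := by
    funext i
    simp only [_root_.restrict]
    by_cases hi : i ∈ Q
    · have hiT : i ∉ T := (Finset.mem_sdiff.mp hi).2
      have := huv i
      rw [if_pos hi, if_pos hi, this, hrz i hiT]
      ring
    · rw [if_neg hi, if_neg hi]
  -- Step 5 : combine P and Q pieces
  have hsplit : euclNorm (restrict v Q) + euclNorm (restrict v P)
      ≤ Real.sqrt 2 * euclNorm (restrict v Ω) := by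
    have hsq : euclNorm (restrict v Q) ^ 2 + euclNorm (restrict v P) ^ 2
        = euclNorm (restrict v Ω) ^ 2 := by
      rw [euclNorm_sq, euclNorm_sq, euclNorm_sq, sum_restrict_sq, sum_restrict_sq,
        sum_restrict_sq, hΩdef, Finset.sum_union hPQdisj]
      ring
    calc euclNorm (restrict v Q) + euclNorm (restrict v P)
        ≤ Real.sqrt 2 * Real.sqrt (euclNorm (restrict v Q) ^ 2 + euclNorm (restrict v P) ^ 2) :=
          add_le_sqrt_two_mul
      _ = Real.sqrt 2 * euclNorm (restrict v Ω) := by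
          rw [hsq, Real.sqrt_sq (euclNorm_nonneg _)]
  -- Step 6 : split v on Ω
  have step6 : euclNorm (restrict v Ω)
      ≤ euclNorm (restrict w1 Ω) + euclNorm (restrict w2 Ω) := by
    have hfun : restrict v Ω = fun i => restrict w1 Ω i + restrict w2 Ω i := by
      funext i
      simp only [_root_.restrict]
      by_cases hi : i ∈ Ω
      · simp only [if_pos hi, hvdef]
      · simp only [if_neg hi]; ring
    rw [hfun]
    exact euclNorm_add_le _ _
  -- Step 7
  have step7 : euclNorm (restrict w1 Ω) ≤ δ4 * euclNorm r := by
    apply rip_offdiag hRIP4 r Ω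
    refine le_trans (Finset.card_le_card ?_) hThcard
    exact Finset.union_subset (hsuppr.trans Finset.subset_union_left)
      hΩTh
  -- Step 8
  have step8 : euclNorm (restrict w2 Ω) ≤ Real.sqrt (1 + δ4) * euclNorm e :=
    rip_noise hRIP4 e Ω hΩcard
  -- Final chain
  have hfinal : euclNorm (restrict r hᶜ)
      ≤ Real.sqrt 2 * (δ4 * euclNorm r + Real.sqrt (1 + δ4) * euclNorm e) := by
    rw [step1]
    refine le_trans step2 ?_
    have h34 : euclNorm (restrict u P) ≤ euclNorm (restrict v Q) := by
      rw [← step4]; exact step3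
    have hchain : euclNorm (restrict u P) + euclNorm (restrict v P)
        ≤ Real.sqrt 2 * euclNorm (restrict v Ω) :=
      le_trans (add_le_add_left h34 _) hsplit
    refine le_trans hchain ?_
    apply mul_le_mul_of_nonneg_left _ (Real.sqrt_nonneg 2)
    exact le_trans step6 (add_le_add step7 step8)
  refine le_trans hfinal ?_
  rw [mul_add, ← mul_assoc, ← mul_assoc, ← Real.sqrt_mul (by norm_num : (0:ℝ) ≤ 2)]
end
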